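/- For each n ∈ ℤ let Ω(n) = {η ∈ ℝ : ∃ n₁ ∈ ℤ, |η + 3 n n₁ (n - n₁)| ≤ C ⟨n n₁ (n-n₁)⟩^{1/100}}. Then for any β > 2/3 + 1/100, sup_{n} ∫_ℝ ⟨τ - n³⟩^{-β} χ_{Ω(n)}(τ - n³) dτ ≤ C' < ∞. -/

import Mathlib

open MeasureTheory
open scoped ENNReal

private lemma aux_anti {β u v : ℝ} (hβ : 0 ≤ β) (hu : 0 ≤ u) (huv : u ≤ v) :
    (1 + v) ^ (-β) ≤ (1 + u) ^ (-β) :=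
  Real.rpow_le_rpow_of_nonpos (by linarith) (by linarith) (neg_nonpos.2 hβ)

private lemma aux_key {C β : ℝ} (hC : 0 < C) (hβ : 2/3 + 1/100 < β) {m : ℝ} (hm : 1 ≤ m) :
    2 * (C * (1 + m) ^ ((1:ℝ)/100)) *
      (1 + max 0 (3 * m - C * (1 + m) ^ ((1:ℝ)/100))) ^ (-β)
    ≤ 4 * C * (1 + (2*C) ^ (100/99*β)) * m ^ (-(β - 1/100)) := by
  have hβ0 : 0 < β := by linarith
  have hm0 : 0 < m := by linarith
  set r := C * (1 + m) ^ ((1:ℝ)/100) with hr_def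
  have hr0 : 0 < r := by positivity
  have hr_le : r ≤ 2 * C * m ^ ((1:ℝ)/100) := by
    have h1 : (1 + m) ^ ((1:ℝ)/100) ≤ (2*m) ^ ((1:ℝ)/100) :=
      Real.rpow_le_rpow (by linarith) (by linarith) (by norm_num)
    have h2 : (2*m) ^ ((1:ℝ)/100) = (2:ℝ) ^ ((1:ℝ)/100) * m ^ ((1:ℝ)/100) :=
      Real.mul_rpow (by norm_num) hm0.le
    have h3 : (2:ℝ) ^ ((1:ℝ)/100) ≤ 2 := by
      calc (2:ℝ) ^ ((1:ℝ)/100) ≤ (2:ℝ) ^ (1:ℝ) :=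
            Real.rpow_le_rpow_of_exponent_le one_le_two (by norm_num)
        _ = 2 := Real.rpow_one 2
    have h4 : (0:ℝ) ≤ m ^ ((1:ℝ)/100) := Real.rpow_nonneg hm0.le _
    calc r ≤ C * ((2:ℝ) ^ ((1:ℝ)/100) * m ^ ((1:ℝ)/100)) := by
          rw [hr_def]; gcongr; rw [← h2]; exact h1
      _ ≤ 2 * C * m ^ ((1:ℝ)/100) := by
          nlinarith [mul_le_mul_of_nonneg_left (mul_le_mul_of_nonneg_right h3 h4) hC.le]
  set D := 1 + (2*C) ^ (100/99*β) with hD_def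
  have hD1 : 1 ≤ D := by
    have h := Real.rpow_nonneg (by positivity : (0:ℝ) ≤ 2*C) (100/99*β)
    rw [hD_def]; linarith
  have hXnn : (0:ℝ) ≤ (1 + max 0 (3 * m - r)) ^ (-β) :=
    Real.rpow_nonneg (by positivity) _
  have hmneg : (0:ℝ) ≤ m ^ (-(β - 1/100)) := Real.rpow_nonneg hm0.le _
  by_cases hcase : r ≤ m
  · -- window small compared to m
    have h1 : m ≤ max 0 (3 * m - r) := le_max_of_le_right (by linarith)
    have h2 : (1 + max 0 (3 * m - r)) ^ (-β) ≤ (1 + m) ^ (-β) := aux_anti hβ0.le hm0.le h1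
    have h3 : (1 + m) ^ (-β) ≤ m ^ (-β) :=
      Real.rpow_le_rpow_of_nonpos hm0 (by linarith) (neg_nonpos.2 hβ0.le)
    have h4 : (0:ℝ) ≤ m ^ ((1:ℝ)/100) := Real.rpow_nonneg hm0.le _
    have h5 : (0:ℝ) ≤ m ^ (-β) := Real.rpow_nonneg hm0.le _
    calc 2 * r * (1 + max 0 (3 * m - r)) ^ (-β)
        ≤ (4 * C * m ^ ((1:ℝ)/100)) * m ^ (-β) := by
          apply mul_le_mul (by linarith) (h2.trans h3) hXnn (by positivity)
      _ = 4 * C * m ^ (-(β - 1/100)) := by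
          rw [mul_assoc, ← Real.rpow_add hm0,
            show (1:ℝ)/100 + -β = -(β - 1/100) by ring]
      _ ≤ 4 * C * D * m ^ (-(β - 1/100)) := by
          have h1 : 4 * C ≤ 4 * C * D := by nlinarith
          exact mul_le_mul_of_nonneg_right h1 hmneg
  · -- window large: m is bounded
    push_neg at hcase
    have hm1 : (0:ℝ) < m ^ ((1:ℝ)/100) := Real.rpow_pos_of_pos hm0 _
    have h99 : m ^ ((99:ℝ)/100) < 2 * C := by
      have hsplit : m ^ ((99:ℝ)/100) * m ^ ((1:ℝ)/100) = m := by
        rw [← Real.rpow_add hm0]; norm_num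
      have : m ^ ((99:ℝ)/100) * m ^ ((1:ℝ)/100) < (2*C) * m ^ ((1:ℝ)/100) := by
        rw [hsplit]; calc m < r := hcase
          _ ≤ 2 * C * m ^ ((1:ℝ)/100) := hr_le
      exact lt_of_mul_lt_mul_right this hm1.le
    have hmle : m ≤ (2*C) ^ ((100:ℝ)/99) := by
      have h1 : (m ^ ((99:ℝ)/100)) ^ ((100:ℝ)/99) ≤ (2*C) ^ ((100:ℝ)/99) :=
        Real.rpow_le_rpow (Real.rpow_nonneg hm0.le _) h99.le (by norm_num)
      calc m = (m ^ ((99:ℝ)/100)) ^ ((100:ℝ)/99) := by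
            rw [← Real.rpow_mul hm0.le]; norm_num
        _ ≤ (2*C) ^ ((100:ℝ)/99) := h1
    have hmβ : m ^ β ≤ D := by
      have h1 : m ^ β ≤ ((2*C) ^ ((100:ℝ)/99)) ^ β :=
        Real.rpow_le_rpow hm0.le hmle hβ0.le
      have h2 : ((2*C) ^ ((100:ℝ)/99)) ^ β = (2*C) ^ (100/99*β) := by
        rw [← Real.rpow_mul (by positivity)]
      rw [hD_def]; rw [h2] at h1; linarith
    have hX1 : (1 + max 0 (3 * m - r)) ^ (-β) ≤ 1 :=
      Real.rpow_le_one_of_one_le_of_nonpos (by have := le_max_left 0 (3*m - r); linarith)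
        (neg_nonpos.2 hβ0.le)
    have h4 : (0:ℝ) ≤ m ^ ((1:ℝ)/100) := hm1.le
    calc 2 * r * (1 + max 0 (3 * m - r)) ^ (-β)
        ≤ 2 * r * 1 := by
          apply mul_le_mul_of_nonneg_left hX1 (by linarith)
      _ = 2 * r := by ring
      _ ≤ 4 * C * m ^ ((1:ℝ)/100) := by linarith
      _ = 4 * C * (m ^ β * m ^ (-(β - 1/100))) := by
          rw [← Real.rpow_add hm0, show β + -(β - 1/100) = (1:ℝ)/100 by ring]
      _ ≤ 4 * C * (D * m ^ (-(β - 1/100))) := by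
          have h := mul_le_mul_of_nonneg_right hmβ hmneg
          nlinarith [h, hC.le]
      _ = 4 * C * D * m ^ (-(β - 1/100)) := by ring

private lemma aux_sep {s : ℝ} (hs : 0 < s) {a b N : ℝ} (ha : 1 ≤ a) (hb : 1 ≤ b)
    (hN : 1 ≤ N) : (N*a*b) ^ (-s) ≤ a ^ (-(3*s/2)) + b ^ (-(3*s/2)) := by
  have key : ∀ x : ℝ, 1 ≤ x → x^3 ≤ (N*a*b)^2 → (N*a*b) ^ (-s) ≤ x ^ (-(3*s/2)) := by
    intro x hx hcube
    have hx0 : (0:ℝ) < x := by linarith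
    have hN0 : (0:ℝ) < N*a*b := by positivity
    have h1 : (N*a*b) ^ (-s) = ((N*a*b) ^ (2:ℝ)) ^ (-s/2) := by
      rw [← Real.rpow_mul hN0.le, show (2:ℝ) * (-s/2) = -s by ring]
    have h2 : x ^ (-(3*s/2)) = (x ^ (3:ℝ)) ^ (-s/2) := by
      rw [← Real.rpow_mul hx0.le, show (3:ℝ) * (-s/2) = -(3*s/2) by ring]
    have h3 : x ^ (3:ℝ) ≤ (N*a*b) ^ (2:ℝ) := by
      rw [show (3:ℝ) = ((3:ℕ):ℝ) by norm_num, show (2:ℝ) = ((2:ℕ):ℝ) by norm_num,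
        Real.rpow_natCast, Real.rpow_natCast]
      exact hcube
    have h4 : (0:ℝ) < x ^ (3:ℝ) := Real.rpow_pos_of_pos hx0 _
    rw [h1, h2]
    exact Real.rpow_le_rpow_of_nonpos h4 h3 (by linarith : -s/2 ≤ 0)
  rcases le_total a b with h | h
  · have hcube : a^3 ≤ (N*a*b)^2 := by
      have h1 : a ≤ b^2 := by nlinarith
      have h2 : a^3 ≤ a^2 * b^2 := by
        nlinarith [mul_le_mul_of_nonneg_left h1 (by positivity : (0:ℝ) ≤ a^2)]
      have h3 : (1:ℝ) ≤ N^2 := by nlinarith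
      nlinarith [mul_le_mul_of_nonneg_left h3 (by positivity : (0:ℝ) ≤ a^2*b^2)]
    exact (key a ha hcube).trans
      (le_add_of_nonneg_right (Real.rpow_nonneg (by linarith) _))
  · have hcube : b^3 ≤ (N*a*b)^2 := by
      have h1 : b ≤ a^2 := by nlinarith
      have h2 : b^3 ≤ a^2 * b^2 := by
        nlinarith [mul_le_mul_of_nonneg_left h1 (by positivity : (0:ℝ) ≤ b^2)]
      have h3 : (1:ℝ) ≤ N^2 := by nlinarith
      nlinarith [mul_le_mul_of_nonneg_left h3 (by positivity : (0:ℝ) ≤ a^2*b^2)]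
    exact (key b hb hcube).trans
      (le_add_of_nonneg_left (Real.rpow_nonneg (by linarith) _))

private lemma aux_interval (c r : ℝ) : {η : ℝ | |η + c| ≤ r} = Set.Icc (-c - r) (-c + r) := by
  ext η
  simp only [Set.mem_setOf_eq, Set.mem_Icc, abs_le]
  constructor <;> rintro ⟨h1, h2⟩ <;> constructor <;> linarith

theorem stmt14 (C : ℝ) (hC : 0 < C) (β : ℝ) (hβ : 2 / 3 + 1 / 100 < β) :
    ∃ C' : ℝ≥0∞, C' ≠ ⊤ ∧ ∀ n : ℤ,
      (∫⁻ τ : ℝ, ENNReal.ofReal (Set.indicator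
          {η : ℝ | ∃ n₁ : ℤ, n₁ ≠ 0 ∧ n - n₁ ≠ 0 ∧
            |η + 3 * (n : ℝ) * (n₁ : ℝ) * ((n : ℝ) - (n₁ : ℝ))| ≤
              C * (1 + |((n * n₁ * (n - n₁) : ℤ) : ℝ)|) ^ ((1 : ℝ) / 100)}
          (fun η => (1 + |η|) ^ (-β)) (τ - (n : ℝ) ^ 3))) ≤ C' := by
  have hβ0 : 0 < β := by linarith
  have ht : 1 < 3 * (β - 1/100) / 2 := by linarith
  set t : ℝ := 3 * (β - 1/100) / 2 with ht_def
  set K : ℝ := 4 * C * (1 + (2*C) ^ (100/99*β)) with hK_def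
  have hK0 : 0 < K := by
    have h := Real.rpow_nonneg (by positivity : (0:ℝ) ≤ 2*C) (100/99*β)
    rw [hK_def]; nlinarith
  have hf_m : Measurable fun η : ℝ => (1 + |η|) ^ (-β) :=
    ((continuous_const.add continuous_abs).rpow_const
      (fun x => Or.inl (ne_of_gt (lt_of_lt_of_le one_pos (le_add_of_nonneg_right (abs_nonneg x)))))).measurable
  have hf_le_one : ∀ η : ℝ, (1 + |η|) ^ (-β) ≤ 1 := fun η =>
    Real.rpow_le_one_of_one_le_of_nonpos
      (by have := abs_nonneg η; linarith) (neg_nonpos.2 hβ0.le)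
  -- summability over ℤ
  have hsum_nat : Summable fun j : ℕ => (j:ℝ) ^ (-t) :=
    Real.summable_nat_rpow.2 (by linarith)
  have hsum : Summable fun j : ℤ => |(j:ℝ)| ^ (-t) := by
    apply Summable.of_nat_of_neg
    · exact hsum_nat.congr fun j => by
        rw [Int.cast_natCast, abs_of_nonneg (by positivity : (0:ℝ) ≤ (j:ℝ))]
    · exact hsum_nat.congr fun j => by
        push_cast
        rw [abs_neg, abs_of_nonneg (by positivity : (0:ℝ) ≤ (j:ℝ))]
  set Z : ℝ≥0∞ := ∑' j : ℤ, ENNReal.ofReal (|(j:ℝ)| ^ (-t)) with hZ_def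
  have hZ : Z ≠ ⊤ := by
    rw [hZ_def, ← ENNReal.ofReal_tsum_of_nonneg
      (fun j => Real.rpow_nonneg (abs_nonneg _) _) hsum]
    exact ENNReal.ofReal_ne_top
  refine ⟨ENNReal.ofReal (2*C) + ENNReal.ofReal K * (2 * Z), ?_, ?_⟩
  · exact ENNReal.add_ne_top.2 ⟨ENNReal.ofReal_ne_top,
      ENNReal.mul_ne_top ENNReal.ofReal_ne_top
        (ENNReal.mul_ne_top (by norm_num) hZ)⟩
  intro n
  by_cases hn : n = 0
  · -- The case n = 0 : the set is just {|η| ≤ C}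
    subst hn
    refine le_trans ?_ le_self_add
    have ptwise : ∀ τ : ℝ, ENNReal.ofReal (Set.indicator
        {η : ℝ | ∃ n₁ : ℤ, n₁ ≠ 0 ∧ 0 - n₁ ≠ 0 ∧
          |η + 3 * ((0:ℤ) : ℝ) * (n₁ : ℝ) * (((0:ℤ) : ℝ) - (n₁ : ℝ))| ≤
            C * (1 + |((0 * n₁ * (0 - n₁) : ℤ) : ℝ)|) ^ ((1 : ℝ) / 100)}
        (fun η => (1 + |η|) ^ (-β)) (τ - ((0:ℤ) : ℝ) ^ 3))
        ≤ Set.indicator (Set.Icc (-C) C) (fun _ => (1:ℝ≥0∞)) τ := by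
      intro τ
      by_cases hτ : (τ - ((0:ℤ) : ℝ) ^ 3) ∈ {η : ℝ | ∃ n₁ : ℤ, n₁ ≠ 0 ∧ 0 - n₁ ≠ 0 ∧
          |η + 3 * ((0:ℤ) : ℝ) * (n₁ : ℝ) * (((0:ℤ) : ℝ) - (n₁ : ℝ))| ≤
            C * (1 + |((0 * n₁ * (0 - n₁) : ℤ) : ℝ)|) ^ ((1 : ℝ) / 100)}
      · rw [Set.indicator_of_mem hτ]
        obtain ⟨n₁, -, -, hle⟩ := hτ
        have habs : |τ| ≤ C := by
          simpa [Real.one_rpow] using hle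
        have hmem : τ ∈ Set.Icc (-C) C := by
          rw [abs_le] at habs; exact ⟨habs.1, habs.2⟩
        rw [Set.indicator_of_mem hmem]
        simpa using ENNReal.ofReal_le_one.2 (hf_le_one _)
      · rw [Set.indicator_of_notMem hτ]
        simp
    calc (∫⁻ τ : ℝ, ENNReal.ofReal (Set.indicator
          {η : ℝ | ∃ n₁ : ℤ, n₁ ≠ 0 ∧ 0 - n₁ ≠ 0 ∧
            |η + 3 * ((0:ℤ) : ℝ) * (n₁ : ℝ) * (((0:ℤ) : ℝ) - (n₁ : ℝ))| ≤
              C * (1 + |((0 * n₁ * (0 - n₁) : ℤ) : ℝ)|) ^ ((1 : ℝ) / 100)}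
          (fun η => (1 + |η|) ^ (-β)) (τ - ((0:ℤ) : ℝ) ^ 3)))
        ≤ ∫⁻ τ : ℝ, Set.indicator (Set.Icc (-C) C) (fun _ => (1:ℝ≥0∞)) τ :=
          lintegral_mono ptwise
      _ = ENNReal.ofReal (2*C) := by
          rw [lintegral_indicator measurableSet_Icc, setLIntegral_const, one_mul,
            Real.volume_Icc]
          congr 1; ring
  · -- The case n ≠ 0
    refine le_trans ?_ le_add_self
    set E : ℤ → Set ℝ := fun n₁ => {η : ℝ | n₁ ≠ 0 ∧ n - n₁ ≠ 0 ∧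
      |η + 3 * (n : ℝ) * (n₁ : ℝ) * ((n : ℝ) - (n₁ : ℝ))| ≤
        C * (1 + |((n * n₁ * (n - n₁) : ℤ) : ℝ)|) ^ ((1 : ℝ) / 100)} with hE_def
    have hE : ∀ n₁ : ℤ, MeasurableSet (E n₁) := by
      intro n₁
      by_cases h1 : n₁ ≠ 0 ∧ n - n₁ ≠ 0
      · have heq : E n₁ = {η : ℝ | |η + 3 * (n : ℝ) * (n₁ : ℝ) * ((n : ℝ) - (n₁ : ℝ))| ≤
            C * (1 + |((n * n₁ * (n - n₁) : ℤ) : ℝ)|) ^ ((1 : ℝ) / 100)} :=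
          Set.ext fun η => ⟨fun ⟨_, _, h⟩ => h, fun h => ⟨h1.1, h1.2, h⟩⟩
        rw [heq, aux_interval]
        exact measurableSet_Icc
      · have heq : E n₁ = ∅ := by
          ext η
          simp only [hE_def, Set.mem_setOf_eq, Set.mem_empty_iff_false, iff_false]
          rintro ⟨hp, hq, -⟩
          exact h1 ⟨hp, hq⟩
        rw [heq]; exact MeasurableSet.empty
    have ptwise : ∀ τ : ℝ, ENNReal.ofReal (Set.indicator
        {η : ℝ | ∃ n₁ : ℤ, n₁ ≠ 0 ∧ n - n₁ ≠ 0 ∧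
          |η + 3 * (n : ℝ) * (n₁ : ℝ) * ((n : ℝ) - (n₁ : ℝ))| ≤
            C * (1 + |((n * n₁ * (n - n₁) : ℤ) : ℝ)|) ^ ((1 : ℝ) / 100)}
        (fun η => (1 + |η|) ^ (-β)) (τ - (n : ℝ) ^ 3))
        ≤ ∑' n₁ : ℤ, ENNReal.ofReal (Set.indicator (E n₁)
            (fun η => (1 + |η|) ^ (-β)) (τ - (n : ℝ) ^ 3)) := by
      intro τ
      by_cases hτ : (τ - (n : ℝ) ^ 3) ∈ {η : ℝ | ∃ n₁ : ℤ, n₁ ≠ 0 ∧ n - n₁ ≠ 0 ∧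
          |η + 3 * (n : ℝ) * (n₁ : ℝ) * ((n : ℝ) - (n₁ : ℝ))| ≤
            C * (1 + |((n * n₁ * (n - n₁) : ℤ) : ℝ)|) ^ ((1 : ℝ) / 100)}
      · have hτ' := hτ
        obtain ⟨n₁, h1, h2, h3⟩ := hτ'
        have hmem : (τ - (n : ℝ) ^ 3) ∈ E n₁ := ⟨h1, h2, h3⟩
        rw [Set.indicator_of_mem hτ]
        refine le_trans ?_ (ENNReal.le_tsum n₁)
        rw [Set.indicator_of_mem hmem]
      · rw [Set.indicator_of_notMem hτ]
        simp
    have hterm : ∀ n₁ : ℤ, (∫⁻ τ : ℝ, ENNReal.ofReal (Set.indicator (E n₁)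
          (fun η => (1 + |η|) ^ (-β)) (τ - (n : ℝ) ^ 3)))
        ≤ ENNReal.ofReal K * (ENNReal.ofReal (|(n₁:ℝ)| ^ (-t)) +
            ENNReal.ofReal (|((n - n₁ : ℤ):ℝ)| ^ (-t))) := by
      intro n₁
      have htrans : (∫⁻ τ : ℝ, ENNReal.ofReal (Set.indicator (E n₁)
            (fun η => (1 + |η|) ^ (-β)) (τ - (n : ℝ) ^ 3)))
          = ∫⁻ η : ℝ, ENNReal.ofReal (Set.indicator (E n₁)
              (fun η => (1 + |η|) ^ (-β)) η) :=
        lintegral_sub_right_eq_self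
          (fun η => ENNReal.ofReal (Set.indicator (E n₁)
            (fun η => (1 + |η|) ^ (-β)) η)) ((n : ℝ) ^ 3)
      by_cases h1 : n₁ ≠ 0 ∧ n - n₁ ≠ 0
      · obtain ⟨hn₁, hn₂⟩ := h1
        set c : ℝ := 3 * (n : ℝ) * (n₁ : ℝ) * ((n : ℝ) - (n₁ : ℝ)) with hc_def
        set m : ℝ := |((n * n₁ * (n - n₁) : ℤ) : ℝ)| with hm_def
        have hm1 : 1 ≤ m := by
          have hne : (n * n₁ * (n - n₁) : ℤ) ≠ 0 :=
            mul_ne_zero (mul_ne_zero hn hn₁) hn₂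
          have h2 : (1:ℤ) ≤ |(n * n₁ * (n - n₁) : ℤ)| := Int.one_le_abs hne
          rw [hm_def]
          exact_mod_cast h2
        have hm0 : (0:ℝ) < m := by linarith
        set r : ℝ := C * (1 + m) ^ ((1:ℝ)/100) with hr_def
        have hr0 : 0 < r := mul_pos hC (Real.rpow_pos_of_pos (by linarith) _)
        have hEeq : E n₁ = Set.Icc (-c - r) (-c + r) := by
          have heq : E n₁ = {η : ℝ | |η + c| ≤ r} :=
            Set.ext fun η => ⟨fun ⟨_, _, h⟩ => h, fun h => ⟨hn₁, hn₂, h⟩⟩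
          rw [heq, aux_interval]
        have hc_abs : |c| = 3 * m := by
          have h2 : c = 3 * ((n * n₁ * (n - n₁) : ℤ) : ℝ) := by
            rw [hc_def]; push_cast; ring
          rw [h2, abs_mul, hm_def]
          norm_num
        have hBbound : ∀ η ∈ Set.Icc (-c - r) (-c + r),
            ENNReal.ofReal ((1 + |η|) ^ (-β)) ≤
              ENNReal.ofReal ((1 + max 0 (3 * m - r)) ^ (-β)) := by
          intro η hη
          apply ENNReal.ofReal_le_ofReal
          have habs : |η + c| ≤ r := by
            rw [← aux_interval] at hη
            exact hη
          have htri : |c| ≤ |η + c| + |η| := by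
            have h3 := abs_add_le (η + c) (-η)
            rw [abs_neg] at h3
            have h4 : η + c + -η = c := by ring
            rw [h4] at h3
            exact h3
          have h5 : max 0 (3 * m - r) ≤ |η| :=
            max_le (abs_nonneg η) (by linarith [hc_abs ▸ htri])
          exact aux_anti hβ0.le (le_max_left 0 _) h5
        have hint : (∫⁻ η : ℝ, ENNReal.ofReal (Set.indicator (E n₁)
              (fun η => (1 + |η|) ^ (-β)) η))
            ≤ ENNReal.ofReal ((1 + max 0 (3 * m - r)) ^ (-β)) * ENNReal.ofReal (2*r) := by
          have heq2 : ∀ η : ℝ, ENNReal.ofReal (Set.indicator (E n₁)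
              (fun η => (1 + |η|) ^ (-β)) η) = Set.indicator (E n₁)
              (fun η => ENNReal.ofReal ((1 + |η|) ^ (-β))) η := by
            intro η
            by_cases h : η ∈ E n₁ <;> simp [h]
          calc (∫⁻ η : ℝ, ENNReal.ofReal (Set.indicator (E n₁)
                (fun η => (1 + |η|) ^ (-β)) η))
              = ∫⁻ η in E n₁, ENNReal.ofReal ((1 + |η|) ^ (-β)) := by
                simp_rw [heq2]
                exact lintegral_indicator (hE n₁) _
            _ = ∫⁻ η in Set.Icc (-c - r) (-c + r),
                  ENNReal.ofReal ((1 + |η|) ^ (-β)) := by rw [hEeq]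
            _ ≤ ∫⁻ _ in Set.Icc (-c - r) (-c + r),
                  ENNReal.ofReal ((1 + max 0 (3 * m - r)) ^ (-β)) :=
                setLIntegral_mono measurable_const hBbound
            _ = ENNReal.ofReal ((1 + max 0 (3 * m - r)) ^ (-β)) *
                  volume (Set.Icc (-c - r) (-c + r)) := setLIntegral_const _ _
            _ = ENNReal.ofReal ((1 + max 0 (3 * m - r)) ^ (-β)) *
                  ENNReal.ofReal (2*r) := by
                rw [Real.volume_Icc]
                congr 1
                ring_nf
        have hKm : (1 + max 0 (3 * m - r)) ^ (-β) * (2*r) ≤ K * m ^ (-(β - 1/100)) := by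
          have hkey := aux_key hC hβ hm1
          rw [hK_def, hr_def]
          calc (1 + max 0 (3 * m - C * (1 + m) ^ ((1:ℝ)/100))) ^ (-β) *
                (2 * (C * (1 + m) ^ ((1:ℝ)/100)))
              = 2 * (C * (1 + m) ^ ((1:ℝ)/100)) *
                (1 + max 0 (3 * m - C * (1 + m) ^ ((1:ℝ)/100))) ^ (-β) := by ring
            _ ≤ 4 * C * (1 + (2*C) ^ (100/99*β)) * m ^ (-(β - 1/100)) := hkey
        have hms : m ^ (-(β - 1/100)) ≤ |(n₁:ℝ)| ^ (-t) + |((n - n₁ : ℤ):ℝ)| ^ (-t) := by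
          have ha : (1:ℝ) ≤ |(n₁:ℝ)| := by exact_mod_cast Int.one_le_abs hn₁
          have hb : (1:ℝ) ≤ |((n - n₁ : ℤ):ℝ)| := by exact_mod_cast Int.one_le_abs hn₂
          have hN : (1:ℝ) ≤ |(n:ℝ)| := by exact_mod_cast Int.one_le_abs hn
          have hsep := aux_sep (s := β - 1/100) (by linarith) ha hb hN
          have hm_eq : m = |(n:ℝ)| * |(n₁:ℝ)| * |((n - n₁ : ℤ):ℝ)| := by
            rw [hm_def]
            push_cast
            rw [abs_mul, abs_mul]
          rw [hm_eq, ht_def]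
          exact hsep
        have hnn : (0:ℝ) ≤ (1 + max 0 (3 * m - r)) ^ (-β) :=
          Real.rpow_nonneg (by positivity) _
        have hrpow_nn : ∀ x : ℝ, (0:ℝ) ≤ |x| ^ (-t) := fun x =>
          Real.rpow_nonneg (abs_nonneg x) _
        calc (∫⁻ τ : ℝ, ENNReal.ofReal (Set.indicator (E n₁)
              (fun η => (1 + |η|) ^ (-β)) (τ - (n : ℝ) ^ 3)))
            = ∫⁻ η : ℝ, ENNReal.ofReal (Set.indicator (E n₁)
                (fun η => (1 + |η|) ^ (-β)) η) := htrans
          _ ≤ ENNReal.ofReal ((1 + max 0 (3 * m - r)) ^ (-β)) *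
                ENNReal.ofReal (2*r) := hint
          _ = ENNReal.ofReal ((1 + max 0 (3 * m - r)) ^ (-β) * (2*r)) :=
              (ENNReal.ofReal_mul hnn).symm
          _ ≤ ENNReal.ofReal (K * m ^ (-(β - 1/100))) := ENNReal.ofReal_le_ofReal hKm
          _ ≤ ENNReal.ofReal (K * (|(n₁:ℝ)| ^ (-t) + |((n - n₁ : ℤ):ℝ)| ^ (-t))) :=
              ENNReal.ofReal_le_ofReal (mul_le_mul_of_nonneg_left hms hK0.le)
          _ = ENNReal.ofReal K * (ENNReal.ofReal (|(n₁:ℝ)| ^ (-t)) +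
                ENNReal.ofReal (|((n - n₁ : ℤ):ℝ)| ^ (-t))) := by
              rw [ENNReal.ofReal_mul hK0.le,
                ENNReal.ofReal_add (hrpow_nn _) (hrpow_nn _)]
      · -- invalid n₁ : the set is empty
        rw [htrans]
        have hempty : ∀ η : ℝ, Set.indicator (E n₁)
            (fun η => (1 + |η|) ^ (-β)) η = 0 := by
          intro η
          apply Set.indicator_of_notMem
          rintro ⟨hp, hq, -⟩
          exact h1 ⟨hp, hq⟩
        simp only [hempty, ENNReal.ofReal_zero, lintegral_zero]
        exact zero_le
    have hmeas : ∀ n₁ : ℤ, AEMeasurable (fun τ : ℝ => ENNReal.ofReal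
        (Set.indicator (E n₁) (fun η => (1 + |η|) ^ (-β)) (τ - (n : ℝ) ^ 3))) volume := by
      intro n₁
      exact (ENNReal.measurable_ofReal.comp ((hf_m.indicator (hE n₁)).comp
        (measurable_id.sub measurable_const))).aemeasurable
    calc (∫⁻ τ : ℝ, ENNReal.ofReal (Set.indicator
          {η : ℝ | ∃ n₁ : ℤ, n₁ ≠ 0 ∧ n - n₁ ≠ 0 ∧
            |η + 3 * (n : ℝ) * (n₁ : ℝ) * ((n : ℝ) - (n₁ : ℝ))| ≤
              C * (1 + |((n * n₁ * (n - n₁) : ℤ) : ℝ)|) ^ ((1 : ℝ) / 100)}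
          (fun η => (1 + |η|) ^ (-β)) (τ - (n : ℝ) ^ 3)))
        ≤ ∫⁻ τ : ℝ, ∑' n₁ : ℤ, ENNReal.ofReal (Set.indicator (E n₁)
            (fun η => (1 + |η|) ^ (-β)) (τ - (n : ℝ) ^ 3)) := lintegral_mono ptwise
      _ = ∑' n₁ : ℤ, ∫⁻ τ : ℝ, ENNReal.ofReal (Set.indicator (E n₁)
            (fun η => (1 + |η|) ^ (-β)) (τ - (n : ℝ) ^ 3)) := lintegral_tsum hmeas
      _ ≤ ∑' n₁ : ℤ, ENNReal.ofReal K * (ENNReal.ofReal (|(n₁:ℝ)| ^ (-t)) +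
            ENNReal.ofReal (|((n - n₁ : ℤ):ℝ)| ^ (-t))) := ENNReal.tsum_le_tsum hterm
      _ = ENNReal.ofReal K * ((∑' n₁ : ℤ, ENNReal.ofReal (|(n₁:ℝ)| ^ (-t))) +
            ∑' n₁ : ℤ, ENNReal.ofReal (|((n - n₁ : ℤ):ℝ)| ^ (-t))) := by
          rw [ENNReal.tsum_mul_left, ENNReal.tsum_add]
      _ = ENNReal.ofReal K * (Z + Z) := by
          congr 1
          congr 1
          exact (Equiv.subLeft n).tsum_eq fun j : ℤ => ENNReal.ofReal (|(j:ℝ)| ^ (-t))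
      _ = ENNReal.ofReal K * (2 * Z) := by rw [two_mul]
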